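/- Let A be a nontrivial commutative unital C*-algebra. For every cardinal number κ, the following are equivalent: (i) there exists a set S of self-adjoint elements of A with Cardinal.mk S = κ that generates A as a C*-algebra; (ii) κ ≤ Cardinal.mk C(Δ(A), ℂ) and there exist a type ι with Cardinal.mk ι = κ and a map f : Δ(A) → (ι → ℝ) that is a topological embedding (IsEmbedding f), where ι → ℝ carries the product topology. -/

import Mathlib

open Topology WeakDual
open Cardinal

universe u

private lemma exists_between_card {α : Type u} {s u : Set α} (hsu : s ⊆ u) {κ : Cardinal.{u}}
    (h1 : #s ≤ κ) (h2 : κ ≤ #u) : ∃ t : Set α, s ⊆ t ∧ t ⊆ u ∧ #t = κ := by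
  rcases le_or_gt ℵ₀ κ with hκ | hκ
  · obtain ⟨w, hwu, hw⟩ := Cardinal.le_mk_iff_exists_subset.mp h2
    refine ⟨s ∪ w, Set.subset_union_left, Set.union_subset hsu hwu, le_antisymm ?_ ?_⟩
    · calc #↥(s ∪ w) ≤ #s + #w := Cardinal.mk_union_le s w
        _ ≤ κ + κ := by rw [hw]; exact add_le_add_left h1 _
        _ = κ := Cardinal.add_eq_self hκ
    · rw [← hw]; exact Cardinal.mk_le_mk_of_subset Set.subset_union_right
  · obtain ⟨c, hc⟩ := exists_add_of_le h1
    have hs0 : #s < ℵ₀ := h1.trans_lt hκ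
    have hcle : c ≤ #↥(u \ s) := by
      rcases le_or_gt ℵ₀ (#↥(u \ s)) with h | h
      · exact ((self_le_add_left c _).trans hc.ge).trans ((hκ.le).trans h)
      · have hu : #u ≤ #s + #↥(u \ s) := by
          calc #u = #↥(s ∪ (u \ s)) := by rw [Set.union_diff_cancel hsu]
            _ ≤ #s + #↥(u \ s) := Cardinal.mk_union_le _ _
        have h3 : c + #s ≤ #↥(u \ s) + #s := by
          rw [add_comm c, add_comm _ (#s)]; exact hc ▸ h2.trans hu
        exact (Cardinal.add_le_add_iff_of_lt_aleph0 hs0).mp h3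
    obtain ⟨w, hw1, hw2⟩ := Cardinal.le_mk_iff_exists_subset.mp hcle
    refine ⟨s ∪ w, Set.subset_union_left, Set.union_subset hsu (hw1.trans Set.diff_subset), ?_⟩
    rw [Cardinal.mk_union_of_disjoint, hw2, ← hc]
    exact Set.disjoint_left.mpr fun x hxs hxw => (hw1 hxw).2 hxs

/-- **Theorem 3.10.** For a nontrivial commutative unital C*-algebra `A` and a cardinal `κ`,
`A` has a generating set (as a C*-algebra) of self-adjoint elements of cardinality `κ` iff
`κ ≤ #C(Δ(A), ℂ)` and the character space `Δ(A)` embeds topologically into `ℝ^κ`. -/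
theorem exists_selfAdjoint_generating_set_iff_embedding
    {A : Type u} [CommCStarAlgebra A] [Nontrivial A] (κ : Cardinal.{u}) :
    (∃ S : Set A, (∀ a ∈ S, IsSelfAdjoint a) ∧ Cardinal.mk S = κ ∧
        (Algebra.adjoin ℂ S).topologicalClosure = ⊤) ↔
      (κ ≤ Cardinal.mk C(characterSpace ℂ A, ℂ) ∧
        ∃ (ι : Type u) (f : characterSpace ℂ A → (ι → ℝ)),
          Cardinal.mk ι = κ ∧ IsEmbedding f) := by
  constructor
  · rintro ⟨S, hS, hcard, hgen⟩
    constructor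
    · rw [← hcard]
      exact (Cardinal.mk_set_le S).trans
        (Cardinal.mk_le_of_injective (gelfandTransform_isometry A).injective)
    · refine ⟨S, fun φ s => (φ s.1).re, hcard, ?_⟩
      have hcont : Continuous (fun φ : characterSpace ℂ A => fun s : S => (φ s.1).re) :=
        continuous_pi fun s => Complex.continuous_re.comp
          ((eval_continuous (𝕜 := ℂ) s.1).comp continuous_subtype_val)
      have hinj : Function.Injective (fun φ : characterSpace ℂ A => fun s : S => (φ s.1).re) := by
        intro φ ψ h
        have hre : ∀ a ∈ S, (φ a).re = (ψ a).re := fun a ha => congrFun h ⟨a, ha⟩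
        have him : ∀ a ∈ S, φ a = ψ a := by
          intro a ha
          have h1 : star (φ a) = φ a := by rw [← map_star φ a, (hS a ha).star_eq]
          have h2 : star (ψ a) = ψ a := by rw [← map_star ψ a, (hS a ha).star_eq]
          rw [RCLike.star_def] at h1 h2
          rw [Complex.conj_eq_iff_im] at h1 h2
          exact Complex.ext (hre a ha) (h1.trans h2.symm)
        have hadj : ∀ a ∈ Algebra.adjoin ℂ S, φ a = ψ a := by
          intro a ha
          induction ha using Algebra.adjoin_induction with
          | mem x hx => exact him x hx
          | algebraMap r => rw [AlgHomClass.commutes φ r, AlgHomClass.commutes ψ r]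
          | add x y _ _ hx hy => rw [map_add, map_add, hx, hy]
          | mul x y _ _ hx hy => rw [map_mul, map_mul, hx, hy]
        have hclosed : IsClosed {x : A | φ x = ψ x} :=
          isClosed_eq (map_continuous φ) (map_continuous ψ)
        have : ∀ a : A, φ a = ψ a := by
          intro a
          have ha : a ∈ closure (Algebra.adjoin ℂ S : Set A) := by
            have := hgen ▸ Algebra.mem_top (R := ℂ) (A := A) (x := a)
            exact this
          exact hclosed.closure_subset_iff.mpr hadj ha
        ext a; exact this a
      exact (hcont.isClosedEmbedding hinj).isEmbedding
  · rintro ⟨hκ, ι, f, hι, hf⟩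
    -- the coordinate functions as elements of C(Δ(A), ℂ)
    set g : ι → C(characterSpace ℂ A, ℂ) := fun i =>
      ⟨fun φ => (f φ i : ℂ), Complex.continuous_ofReal.comp ((continuous_apply i).comp hf.continuous)⟩
      with hg
    have hgstar : ∀ i, star (g i) = g i := by
      intro i; ext φ
      simp [hg, Complex.conj_ofReal]
    -- the preimages in A
    let e := gelfandStarTransform A
    set a : ι → A := fun i => e.symm (g i) with ha
    have hasa : ∀ i, IsSelfAdjoint (a i) := by
      intro i
      rw [IsSelfAdjoint, ha]
      simp only
      rw [← map_star e.symm (g i), hgstar]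
    -- Stone–Weierstrass: range g generates C(Δ(A), ℂ)
    have hsep : (StarAlgebra.adjoin ℂ (Set.range g)).SeparatesPoints := by
      intro φ ψ hφψ
      have : f φ ≠ f ψ := fun h => hφψ (hf.injective h)
      obtain ⟨i, hi⟩ := Function.ne_iff.mp this
      exact ⟨g i, ⟨g i, StarAlgebra.subset_adjoin ℂ _ (Set.mem_range_self i), rfl⟩,
        by simpa [hg] using fun h => hi (by exact_mod_cast h)⟩
    have hSW : (StarAlgebra.adjoin ℂ (Set.range g)).topologicalClosure = ⊤ :=
      ContinuousMap.starSubalgebra_topologicalClosure_eq_top_of_separatesPoints _ hsep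
    -- convert to Algebra.adjoin: range g is star-closed
    have hstar_range : Set.range g ∪ star (Set.range g) = Set.range g := by
      rw [Set.union_eq_self_of_subset_right]
      intro x hx
      rw [Set.mem_star] at hx
      obtain ⟨i, hi⟩ := hx
      exact ⟨i, by rw [← hgstar i, hi, star_star]⟩
    set B : Subalgebra ℂ C(characterSpace ℂ A, ℂ) := Algebra.adjoin ℂ (Set.range g) with hB
    have hclos : closure (B : Set C(characterSpace ℂ A, ℂ)) = Set.univ := by
      have h1 : ((StarAlgebra.adjoin ℂ (Set.range g)) : Set C(characterSpace ℂ A, ℂ)) =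
          (B : Set C(characterSpace ℂ A, ℂ)) := by
        rw [hB, ← StarSubalgebra.coe_toSubalgebra, StarAlgebra.adjoin_toSubalgebra, hstar_range]
      calc closure (B : Set C(characterSpace ℂ A, ℂ))
          = ((StarAlgebra.adjoin ℂ (Set.range g)).topologicalClosure : Set _) := by
            rw [← h1]; rfl
        _ = Set.univ := by rw [hSW]; rfl
    -- pull back along the Gelfand homeomorphism
    have hiso : Isometry (e : A → C(characterSpace ℂ A, ℂ)) := gelfandTransform_isometry A
    let ehomeo : A ≃ₜ C(characterSpace ℂ A, ℂ) :=
      { toEquiv := ⟨e, e.symm, e.left_inv, e.right_inv⟩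
        continuous_toFun := hiso.continuous
        continuous_invFun := by
          have hinv : Isometry (fun x : C(characterSpace ℂ A, ℂ) => e.symm x) := by
            intro x y
            calc edist (e.symm x) (e.symm y) = edist (e (e.symm x)) (e (e.symm y)) :=
                  (hiso _ _).symm
              _ = edist x y := by rw [e.apply_symm_apply, e.apply_symm_apply]
          exact hinv.continuous }
    -- image of the adjoin under the Gelfand transform
    set S₀ : Set A := Set.range a with hS₀
    have himg : (⇑(e : A →⋆ₐ[ℂ] C(characterSpace ℂ A, ℂ))) '' S₀ = Set.range g := by
      rw [hS₀, ← Set.range_comp]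
      apply Set.range_eq_iff _ _ |>.mpr ?_
      constructor
      · intro i
        show e (e.symm (g i)) ∈ _
        rw [e.apply_symm_apply]
        exact Set.mem_range_self i
      · intro x hx
        obtain ⟨i, rfl⟩ := hx
        exact ⟨i, by show e (e.symm (g i)) = g i; rw [e.apply_symm_apply]⟩
    have hmap : (Algebra.adjoin ℂ S₀).map ((e : A →⋆ₐ[ℂ] C(characterSpace ℂ A, ℂ)) : A →ₐ[ℂ] _)
        = B := by
      rw [AlgHom.map_adjoin, hB]
      exact congrArg _ himg
    have hgen₀ : (Algebra.adjoin ℂ S₀).topologicalClosure = ⊤ := by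
      have hsetmap : ⇑ehomeo '' ((Algebra.adjoin ℂ S₀ : Subalgebra ℂ A) : Set A)
          = (B : Set C(characterSpace ℂ A, ℂ)) := by
        rw [← hmap]; rfl
      have hpre : ((Algebra.adjoin ℂ S₀ : Subalgebra ℂ A) : Set A)
          = ⇑ehomeo ⁻¹' (B : Set C(characterSpace ℂ A, ℂ)) := by
        rw [← hsetmap, Set.preimage_image_eq _ ehomeo.injective]
      apply SetLike.ext'
      rw [Subalgebra.topologicalClosure_coe, Algebra.coe_top, hpre,
        ← ehomeo.preimage_closure, hclos, Set.preimage_univ]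
    -- the self-adjoint elements form a big enough set
    set sa : Set A := {x : A | IsSelfAdjoint x} with hsa
    have hS₀sa : S₀ ⊆ sa := by rintro x ⟨i, rfl⟩; exact hasa i
    have hinf : ℵ₀ ≤ #↥sa := by
      rw [Cardinal.aleph0_le_mk_iff]
      refine Infinite.of_injective (fun n : ℕ => (⟨algebraMap ℂ A n, ?_⟩ : ↥sa)) ?_
      · show IsSelfAdjoint _
        rw [IsSelfAdjoint, ← algebraMap_star_comm, star_natCast]
      · intro m n h
        have h2 : (algebraMap ℂ A) m = (algebraMap ℂ A) n := congrArg Subtype.val h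
        exact_mod_cast (algebraMap ℂ A).injective h2
    have hAsa : #A ≤ #↥sa := by
      have hinj : Function.Injective
          (fun x : A => ((realPart x : ↥sa), (imaginaryPart x : ↥sa))) := by
        · intro x y h
          have h1 : (realPart x : A) = realPart y := congrArg (Subtype.val ∘ Prod.fst) h
          have h2 : (imaginaryPart x : A) = imaginaryPart y :=
            congrArg (Subtype.val ∘ Prod.snd) h
          rw [← realPart_add_I_smul_imaginaryPart x, ← realPart_add_I_smul_imaginaryPart y,
            h1, h2]
      calc #A ≤ #(↥sa × ↥sa) := Cardinal.mk_le_of_injective hinj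
        _ = #↥sa * #↥sa := by rw [Cardinal.mk_prod]; simp
        _ = #↥sa := Cardinal.mul_eq_self hinf
    have hκsa : κ ≤ #↥sa := by
      refine le_trans (hκ.trans ?_) hAsa
      exact Cardinal.mk_le_of_injective (f := fun x => e.symm x)
        (fun x y h => by simpa using congrArg e h)
    have hS₀κ : #↥S₀ ≤ κ := hι ▸ Cardinal.mk_range_le
    obtain ⟨T, hT1, hT2, hT3⟩ := exists_between_card hS₀sa hS₀κ hκsa
    refine ⟨T, fun x hx => hT2 hx, hT3, ?_⟩
    rw [eq_top_iff]
    intro x _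
    have hsub : closure ((Algebra.adjoin ℂ S₀ : Subalgebra ℂ A) : Set A)
        ⊆ closure ((Algebra.adjoin ℂ T : Subalgebra ℂ A) : Set A) :=
      closure_mono (Algebra.adjoin_mono hT1)
    have hx0 : x ∈ (Algebra.adjoin ℂ S₀).topologicalClosure := hgen₀ ▸ trivial
    exact hsub hx0
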